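/- A set of vertices S of a finite simple graph G is triangle-path convex if and only if (1) no vertex outside S has two or more neighbours in S, and (2) there do not exist two non-adjacent vertices of S both having a neighbour in the same connected component of G − S. -/

import Mathlib

open Set

variable {V : Type*}

/-- `p` is a triangle path: a path with no edge joining vertices at index
distance greater than 2 along the path. -/
def TPath (G : SimpleGraph V) {u v : V} (p : G.Walk u v) : Prop :=
  p.IsPath ∧ ∀ i j : ℕ, i + 2 < j →
    ∀ (hi : i < p.support.length) (hj : j < p.support.length),
      ¬ G.Adj (p.support.get ⟨i, hi⟩) (p.support.get ⟨j, hj⟩)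

/-- `p` is a monophonic (induced) path: a path with no edge joining vertices at
index distance greater than 1 along the path. -/
def MPath (G : SimpleGraph V) {u v : V} (p : G.Walk u v) : Prop :=
  p.IsPath ∧ ∀ i j : ℕ, i + 1 < j →
    ∀ (hi : i < p.support.length) (hj : j < p.support.length),
      ¬ G.Adj (p.support.get ⟨i, hi⟩) (p.support.get ⟨j, hj⟩)

/-- `p` is a geodesic (shortest path). -/
def GPath (G : SimpleGraph V) {u v : V} (p : G.Walk u v) : Prop :=
  p.IsPath ∧ ∀ q : G.Walk u v, p.length ≤ q.length

/-- `S` is convex in the triangle path convexity. -/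
def TConvex (G : SimpleGraph V) (S : Set V) : Prop :=
  ∀ ⦃u v : V⦄, u ∈ S → v ∈ S → ∀ p : G.Walk u v, TPath G p → ∀ w ∈ p.support, w ∈ S

/-- `S` is convex in the monophonic convexity. -/
def MConvex (G : SimpleGraph V) (S : Set V) : Prop :=
  ∀ ⦃u v : V⦄, u ∈ S → v ∈ S → ∀ p : G.Walk u v, MPath G p → ∀ w ∈ p.support, w ∈ S

/-- `S` is convex in the geodetic convexity. -/
def GConvex (G : SimpleGraph V) (S : Set V) : Prop :=
  ∀ ⦃u v : V⦄, u ∈ S → v ∈ S → ∀ p : G.Walk u v, GPath G p → ∀ w ∈ p.support, w ∈ S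

/-- `S` is `P₃`-convex: no vertex outside `S` has two neighbours in `S`. -/
def P3Convex (G : SimpleGraph V) (S : Set V) : Prop :=
  ∀ w ∉ S, ∀ a ∈ S, ∀ b ∈ S, G.Adj w a → G.Adj w b → a = b

/-- The triangle path interval of `S`. -/
def TInterval (G : SimpleGraph V) (S : Set V) : Set V :=
  S ∪ {w | ∃ u ∈ S, ∃ v ∈ S, ∃ p : G.Walk u v, TPath G p ∧ w ∈ p.support}

/-- The monophonic interval of `S`. -/
def MInterval (G : SimpleGraph V) (S : Set V) : Set V :=
  S ∪ {w | ∃ u ∈ S, ∃ v ∈ S, ∃ p : G.Walk u v, MPath G p ∧ w ∈ p.support}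

/-- The geodetic interval of `S`. -/
def GInterval (G : SimpleGraph V) (S : Set V) : Set V :=
  S ∪ {w | ∃ u ∈ S, ∃ v ∈ S, ∃ p : G.Walk u v, GPath G p ∧ w ∈ p.support}

/-- The `P₃`-interval of `S`: `S` together with the vertices having at least two
neighbours in `S`. -/
def P3Interval (G : SimpleGraph V) (S : Set V) : Set V :=
  S ∪ {w | w ∉ S ∧ ∃ a ∈ S, ∃ b ∈ S, a ≠ b ∧ G.Adj w a ∧ G.Adj w b}

/-- The convex hull of `S` in the triangle path convexity. -/
def THull (G : SimpleGraph V) (S : Set V) : Set V :=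
  ⋂₀ {C : Set V | S ⊆ C ∧ TConvex G C}

/-- The convex hull of `S` in the monophonic convexity. -/
def MHull (G : SimpleGraph V) (S : Set V) : Set V :=
  ⋂₀ {C : Set V | S ⊆ C ∧ MConvex G C}

/-- The convex hull of `S` in the geodetic convexity. -/
def GHull (G : SimpleGraph V) (S : Set V) : Set V :=
  ⋂₀ {C : Set V | S ⊆ C ∧ GConvex G C}

/-- `K` separates the vertices `a` and `b`: both lie outside `K` and every walk
between them meets `K`. -/
def Separates (G : SimpleGraph V) (K : Set V) (a b : V) : Prop :=
  a ∉ K ∧ b ∉ K ∧ ∀ p : G.Walk a b, ∃ w ∈ p.support, w ∈ K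

/-- `K` is a separator of `G`. -/
def IsSeparator (G : SimpleGraph V) (K : Set V) : Prop :=
  ∃ a b : V, Separates G K a b

/-- `G` is prime: it has no clique separator. -/
def IsPrime (G : SimpleGraph V) : Prop :=
  ¬ ∃ C : Set V, G.IsClique C ∧ IsSeparator G C

/-- `K` is a minimal separator for `a` and `b`. -/
def IsMinSeparator (G : SimpleGraph V) (K : Set V) (a b : V) : Prop :=
  Separates G K a b ∧ ∀ K' : Set V, K' ⊂ K → ¬ Separates G K' a b

/-- `W` induces a maximal prime subgraph of `G`. -/
def IsMPSubgraph (G : SimpleGraph V) (W : Set V) : Prop :=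
  IsPrime (G.induce W) ∧ ∀ W' : Set V, W ⊆ W' → IsPrime (G.induce W') → W' = W

/-- `C` is the vertex set of a connected component of `G - S`. -/
def IsCompOf (G : SimpleGraph V) (S C : Set V) : Prop :=
  C.Nonempty ∧ C ∩ S = ∅ ∧
  (∀ x ∈ C, ∀ y ∈ C, ∃ p : G.Walk x y, ∀ w ∈ p.support, w ∈ C) ∧
  (∀ x ∈ C, ∀ y : V, y ∉ S → G.Adj x y → y ∈ C)

lemma exists_walk_of_chain (G : SimpleGraph V) :
    ∀ (l : List V) (hne : l ≠ []), l.Chain' G.Adj →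
      ∃ p : G.Walk (l.head hne) (l.getLast hne), p.support = l := by
  intro l
  induction l with
  | nil => intro h; exact absurd rfl h
  | cons a t ih =>
    intro _ hc
    cases t with
    | nil => exact ⟨SimpleGraph.Walk.nil, rfl⟩
    | cons b t' =>
      unfold List.Chain' at hc; rw [List.isChain_cons_cons] at hc
      obtain ⟨q, hq⟩ := ih (by simp) hc.2
      refine ⟨(SimpleGraph.Walk.cons hc.1 q).copy rfl ?_, ?_⟩
      · exact (List.getLast_cons (by simp)).symm
      · exact (SimpleGraph.Walk.support_copy _ _ _).trans (congrArg (a :: ·) hq)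


lemma tpath_of_outside_connection (G : SimpleGraph V) (S : Set V)
    {u v u' v' : V} (hu : u ∈ S) (hv : v ∈ S) (huv : u ≠ v) (hnadj : ¬ G.Adj u v)
    (hu' : u' ∉ S) (hv' : v' ∉ S) (hadju : G.Adj u u') (hadjv : G.Adj v v')
    (p : G.Walk u' v') (hp : ∀ w ∈ p.support, w ∉ S) :
    ∃ q : G.Walk u v, TPath G q ∧ ∃ w ∈ q.support, w ∉ S := by
  classical
  set Good : List V → Prop := fun l => l ≠ [] ∧ l.Chain' G.Adj ∧ (∀ w ∈ l, w ∉ S) ∧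
      (∀ x ∈ l.head?, G.Adj u x) ∧ (∀ y ∈ l.getLast?, G.Adj v y) with hGoodDef
  have hex : ∃ n, ∃ l, Good l ∧ l.length = n := by
    refine ⟨p.support.length, p.support, ⟨p.support_ne_nil, p.isChain_adj_support, hp, ?_, ?_⟩, rfl⟩
    · intro x hx
      rw [List.head?_eq_head p.support_ne_nil, Option.mem_some_iff] at hx
      rw [← hx, SimpleGraph.Walk.head_support]; exact hadju
    · intro y hy
      rw [List.getLast?_eq_getLast p.support_ne_nil, Option.mem_some_iff] at hy
      rw [← hy, SimpleGraph.Walk.getLast_support]; exact hadjv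
  obtain ⟨l, hGood, hlen⟩ := Nat.find_spec hex
  have hmin : ∀ l' : List V, Good l' → l.length ≤ l'.length := fun l' hl' => by
    rw [hlen]; exact Nat.find_min' hex ⟨l', hl', rfl⟩
  obtain ⟨hne, hch, hout, hhead, hlast⟩ := hGood
  have hm0 : 0 < l.length := List.length_pos_iff.mpr hne
  -- getLast? of a drop
  have hLdrop : ∀ b, b < l.length → (l.drop b).getLast? = l.getLast? := by
    intro b hb
    conv_rhs => rw [← List.take_append_drop b l]
    rw [List.getLast?_append_of_ne_nil]
    intro h
    have := congrArg List.length h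
    simp at this; omega
  have hdropne : ∀ b, b < l.length → l.drop b ≠ [] := by
    intro b hb h
    have := congrArg List.length h; simp at this; omega
  have hLtake : ∀ a (ha : a < l.length), (l.take (a+1)).getLast? = some (l[a]'ha) := by
    intro a ha
    rw [List.take_succ, List.getElem?_eq_getElem ha, Option.toList_some, List.getLast?_concat]
  -- surgery 1 : drop b
  have surgu : ∀ b (hb : b < l.length), 0 < b → ¬ G.Adj u (l[b]'hb) := by
    intro b hb hb0 hadj
    have hG : Good (l.drop b) := by
      refine ⟨hdropne b hb, hch.drop b, fun w hw => hout w (List.mem_of_mem_drop hw), ?_, ?_⟩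
      · intro x hx
        rw [List.head?_drop, List.getElem?_eq_getElem hb, Option.mem_some_iff] at hx
        rw [← hx]; exact hadj
      · intro y hy; rw [hLdrop b hb] at hy; exact hlast y hy
    have := hmin _ hG
    simp only [List.length_drop] at this; omega
  -- surgery 2 : take (a+1)
  have surgv : ∀ a (ha : a < l.length), a + 1 < l.length → ¬ G.Adj v (l[a]'ha) := by
    intro a ha ham hadj
    have htne : l.take (a+1) ≠ [] := by
      intro h; have := congrArg List.length h; rw [List.length_take, List.length_nil] at this; omega
    have hG : Good (l.take (a+1)) := by
      refine ⟨htne, hch.take _, fun w hw => hout w (List.mem_of_mem_take hw), ?_, ?_⟩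
      · intro x hx
        rw [List.head?_take] at hx; simp at hx
        exact hhead x hx
      · intro y hy
        rw [hLtake a ha, Option.mem_some_iff] at hy
        rw [← hy]; exact hadj
    have := hmin _ hG
    simp only [List.length_take] at this; omega
  -- surgery 3 : take a ++ drop b
  have surg : ∀ a b (ha : 0 < a) (hab : a < b) (hb : b < l.length),
      ¬ G.Adj (l[a-1]'(by omega)) (l[b]'hb) := by
    intro a b ha hab hb hadj
    have htne : l.take a ≠ [] := by
      intro h; have := congrArg List.length h; rw [List.length_take, List.length_nil] at this; omega
    have hG : Good (l.take a ++ l.drop b) := by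
      refine ⟨by simp [htne], ?_, ?_, ?_, ?_⟩
      · unfold List.Chain'; rw [List.isChain_append]
        refine ⟨hch.take _, hch.drop _, ?_⟩
        intro x hx y hy
        obtain ⟨a', rfl⟩ : ∃ a', a = a' + 1 := ⟨a - 1, by omega⟩
        rw [hLtake a' (by omega), Option.mem_some_iff] at hx
        rw [List.head?_drop, List.getElem?_eq_getElem hb, Option.mem_some_iff] at hy
        subst hx; subst hy
        simpa using hadj
      · intro w hw
        rcases List.mem_append.mp hw with h | h
        · exact hout w (List.mem_of_mem_take h)
        · exact hout w (List.mem_of_mem_drop h)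
      · intro x hx
        rw [List.head?_append_of_ne_nil _ htne, List.head?_take] at hx
        simp only [if_neg (by omega : ¬ a = 0)] at hx
        exact hhead x hx
      · intro y hy
        rw [List.getLast?_append_of_ne_nil _ (hdropne b hb), hLdrop b hb] at hy
        exact hlast y hy
    have := hmin _ hG
    simp only [List.length_append, List.length_take, List.length_drop] at this
    omega
  -- no duplicates
  have key : ∀ i j (hi : i < l.length) (hj : j < l.length), i < j → l[i]'hi ≠ l[j]'hj := by
    intro i j hi hj hij heq
    rcases Nat.eq_zero_or_pos i with rfl | hi0
    · have hx : l.head? = some (l[0]'hi) := by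
        rw [List.head?_eq_head hne, List.head_eq_getElem_zero]
      have hadj : G.Adj u (l[j]'hj) := heq ▸ hhead _ hx
      exact surgu j hj hij hadj
    · have hch' := List.isChain_iff_getElem.mp hch (i-1) (by omega)
      have hadj' : G.Adj (l[i-1]'(by omega)) (l[j]'hj) := by
        rw [← heq]
        convert hch' using 2
        omega
      exact surg i j hi0 hij hj hadj'
  have hnodup : l.Nodup := by
    rw [List.nodup_iff_injective_get]
    rintro ⟨i, hi⟩ ⟨j, hj⟩ hg
    simp only [List.get_eq_getElem] at hg
    simp only [Fin.mk.injEq]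
    rcases lt_trichotomy i j with h | h | h
    · exact absurd hg (key i j hi hj h)
    · exact h
    · exact absurd hg.symm (key j i hj hi h)
  have hunel : u ∉ l := fun h => hout u h hu
  have hvnel : v ∉ l := fun h => hout v h hv
  obtain ⟨q0, hq0⟩ := exists_walk_of_chain G l hne hch
  have hAdjHead : G.Adj u (l.head hne) := hhead _ (List.head?_eq_head hne)
  have hAdjLast : G.Adj v (l.getLast hne) := hlast _ (List.getLast?_eq_getLast hne)
  refine ⟨SimpleGraph.Walk.cons hAdjHead (q0.concat hAdjLast.symm), ?_, ?_⟩
  · have hsup : (SimpleGraph.Walk.cons hAdjHead (q0.concat hAdjLast.symm)).support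
        = u :: (l ++ [v]) := by
      simp [SimpleGraph.Walk.support_cons, SimpleGraph.Walk.support_concat, hq0,
        List.concat_eq_append]
    constructor
    · rw [SimpleGraph.Walk.isPath_def, hsup]
      simp only [List.nodup_cons, List.nodup_append, List.mem_append, List.mem_singleton,
        List.nodup_singleton, List.disjoint_singleton]
      refine ⟨?_, hnodup, ⟨by simp, by simp⟩, by rintro a ha b rfl rfl; exact hvnel ha⟩
      rintro (h | h)
      · exact hunel h
      · exact huv h
    · intro i j hij hi hj hadj
      rw [List.get_eq_getElem, List.get_eq_getElem] at hadj
      simp only [hsup] at hi hj hadj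
      simp only [List.length_cons, List.length_append, List.length_singleton, List.length_nil] at hi hj
      rcases Nat.eq_zero_or_pos i with rfl | hi0
      · rw [List.getElem_cons_zero] at hadj
        rcases Nat.lt_or_ge j (l.length + 1) with hjm | hjm
        · obtain ⟨t, rfl⟩ : ∃ t, j = t + 1 := ⟨j - 1, by omega⟩
          rw [List.getElem_cons_succ, List.getElem_append_left (by omega)] at hadj
          exact surgu t (by omega) (by omega) hadj
        · have hj' : j = l.length + 1 := by omega
          subst hj'
          rw [List.getElem_cons_succ, List.getElem_concat_length rfl] at hadj
          exact hnadj hadj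
      · obtain ⟨t, rfl⟩ : ∃ t, i = t + 1 := ⟨i - 1, by omega⟩
        rw [List.getElem_cons_succ, List.getElem_append_left (by omega)] at hadj
        rcases Nat.lt_or_ge j (l.length + 1) with hjm | hjm
        · obtain ⟨t', rfl⟩ : ∃ t', j = t' + 1 := ⟨j - 1, by omega⟩
          rw [List.getElem_cons_succ, List.getElem_append_left (by omega)] at hadj
          have := surg (t+1) t' (by omega) (by omega) (by omega)
          simp only [Nat.add_sub_cancel] at this
          exact this hadj
        · have hj' : j = l.length + 1 := by omega
          subst hj'
          rw [List.getElem_cons_succ, List.getElem_concat_length rfl] at hadj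
          exact surgv t (by omega) (by omega) hadj.symm
  · refine ⟨l.head hne, ?_, hout _ (List.head_mem hne)⟩
    simp only [SimpleGraph.Walk.support_cons, SimpleGraph.Walk.support_concat, hq0,
      List.concat_eq_append]
    exact List.mem_cons_of_mem _ (List.mem_append_left _ (List.head_mem hne))

lemma tconvex_of_conditions (G : SimpleGraph V) (S : Set V)
    (h1 : ∀ w ∉ S, ∀ a ∈ S, ∀ b ∈ S, G.Adj w a → G.Adj w b → a = b)
    (h2 : ¬ ∃ u ∈ S, ∃ v ∈ S, u ≠ v ∧ ¬ G.Adj u v ∧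
        ∃ u' v' : V, u' ∉ S ∧ v' ∉ S ∧ G.Adj u u' ∧ G.Adj v v' ∧
          ∃ p : G.Walk u' v', ∀ w ∈ p.support, w ∉ S) :
    TConvex G S := by
  classical
  intro u v hu hv p hp w hw
  by_contra hwS
  obtain ⟨k, hk, hks⟩ := List.mem_iff_getElem.mp hw
  set s := p.support with hsdef
  have hsne : s ≠ [] := p.support_ne_nil
  have hs0 : ∀ h : (0:ℕ) < s.length, s[0]'h = u := by
    intro h; rw [← List.head_eq_getElem_zero hsne]; exact p.head_support
  have hslast : ∀ h : s.length - 1 < s.length, s[s.length - 1]'h = v := by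
    intro h; rw [← List.getLast_eq_getElem hsne]; exact p.getLast_support
  have hnodup : s.Nodup := hp.1.support_nodup
  have hch : s.Chain' G.Adj := p.isChain_adj_support
  have hadjc : ∀ t (ht : t + 1 < s.length),
      G.Adj (s[t]'(by omega)) (s[t+1]'(by omega)) := by
    intro t ht
    have := List.isChain_iff_getElem.mp hch t (by omega)
    simpa [List.get_eq_getElem] using this
  have tcond : ∀ i j, i + 2 < j → ∀ (hi : i < s.length) (hj : j < s.length),
      ¬ G.Adj (s[i]'hi) (s[j]'hj) := by
    intro i j h hi hj
    have := hp.2 i j h hi hj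
    simpa [List.get_eq_getElem] using this
  have hinj : ∀ i j (hi : i < s.length) (hj : j < s.length), s[i]'hi = s[j]'hj → i = j := by
    intro i j hi hj h
    have := List.nodup_iff_injective_get.mp hnodup
      (show s.get ⟨i, hi⟩ = s.get ⟨j, hj⟩ by simpa [List.get_eq_getElem] using h)
    exact congrArg Fin.val this
  set P : ℕ → Prop := fun t => ∃ x, s[t]? = some x ∧ x ∈ S with hPdef
  have hP0 : P 0 := ⟨u, by rw [List.getElem?_eq_getElem (by omega), hs0], hu⟩
  have hPk : ¬ P k := by
    rintro ⟨x, hx1, hx2⟩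
    rw [List.getElem?_eq_getElem hk, Option.some.injEq] at hx1
    exact hwS (by rw [← hx1, hks] at hx2; exact hx2)
  have hPof : ∀ t (ht : t < s.length), s[t]'ht ∈ S → P t :=
    fun t ht h => ⟨s[t]'ht, by rw [List.getElem?_eq_getElem ht], h⟩
  have hPto : ∀ t, P t → ∃ ht : t < s.length, s[t]'ht ∈ S := by
    rintro t ⟨x, hx1, hx2⟩
    have ht : t < s.length := by
      by_contra h
      rw [List.getElem?_eq_none (by omega)] at hx1
      cases hx1
    rw [List.getElem?_eq_getElem ht, Option.some.injEq] at hx1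
    exact ⟨ht, hx1 ▸ hx2⟩
  set i := Nat.findGreatest P k with hidef
  have hPi : P i := Nat.findGreatest_spec (Nat.zero_le k) hP0
  have hik : i ≤ k := Nat.findGreatest_le k
  have hilt : i < k := lt_of_le_of_ne hik (fun h => hPk (h ▸ hPi))
  have hmax : ∀ t, i < t → t ≤ k → ¬ P t := fun t ht1 ht2 =>
    Nat.findGreatest_is_greatest ht1 ht2
  have hexj : ∃ t, P (k + t) := by
    refine ⟨s.length - 1 - k, ?_⟩
    have hke : k + (s.length - 1 - k) = s.length - 1 := by omega
    rw [hke]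
    exact ⟨v, by rw [List.getElem?_eq_getElem (by omega), hslast], hv⟩
  set j := k + Nat.find hexj with hjdef
  have hPj : P j := Nat.find_spec hexj
  have hkj : k < j := by
    have : Nat.find hexj ≠ 0 := fun h => hPk (by rw [hjdef, h, Nat.add_zero] at hPj; exact hPj)
    omega
  have hminj : ∀ t, k ≤ t → t < j → ¬ P t := by
    intro t ht1 ht2 hPt
    have := Nat.find_min hexj (show t - k < Nat.find hexj by omega)
    apply this
    have : k + (t - k) = t := by omega
    rw [this]; exact hPt
  obtain ⟨hjlen, sxj⟩ := hPto j hPj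
  obtain ⟨hilen, sxi⟩ := hPto i hPi
  have between : ∀ t (ht1 : i < t) (ht2 : t < j), s[t]'(by omega) ∉ S := by
    intro t ht1 ht2 hmem
    have hPt : P t := hPof t (by omega) hmem
    rcases le_or_gt t k with h | h
    · exact hmax t ht1 h hPt
    · exact hminj t (by omega) ht2 hPt
  have hij2 : i + 2 ≤ j := by omega
  have hgetcong : ∀ (a b : ℕ) (hab : a = b) (ha : a < s.length),
      s[a]'ha = s[b]'(hab ▸ ha) := by
    intro a b hab ha; subst hab; rfl
  rcases eq_or_lt_of_le hij2 with hje | hjlt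
  · -- j = i + 2 : single vertex outside S with two neighbours in S
    have hc : s[i+1]'(by omega) ∉ S := between (i+1) (by omega) (by omega)
    have ha1 : G.Adj (s[i+1]'(by omega)) (s[i]'hilen) := (hadjc i (by omega)).symm
    have ha2 : G.Adj (s[i+1]'(by omega)) (s[j]'hjlen) := by
      have h := hadjc (i+1) (by omega)
      have he : s[i+1+1]'(by omega) = s[j]'hjlen := hgetcong _ _ (by omega) _
      rwa [he] at h
    have := h1 _ hc _ sxi _ sxj ha1 ha2
    have := hinj i j hilen hjlen this
    omega
  · -- j > i + 2 : two nonadjacent vertices of S joined through the outside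
    apply h2
    refine ⟨s[i]'hilen, sxi, s[j]'hjlen, sxj, ?_, tcond i j hjlt hilen hjlen,
      s[i+1]'(by omega), s[j-1]'(by omega), between (i+1) (by omega) (by omega),
      between (j-1) (by omega) (by omega), hadjc i (by omega), ?_, ?_⟩
    · intro h; have := hinj i j hilen hjlen h; omega
    · have h := hadjc (j-1) (by omega)
      have he : s[j-1+1]'(by omega) = s[j]'hjlen := hgetcong _ _ (by omega) _
      rw [he] at h
      exact h.symm
    · -- the walk inside the block
      set l' : List V := (s.take j).drop (i+1) with hl'def
      have hl'len : l'.length = j - (i+1) := by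
        rw [hl'def, List.length_drop, List.length_take]; omega
      have hl'ne : l' ≠ [] := by
        intro h; rw [h] at hl'len; simp at hl'len; omega
      have hl'get : ∀ t (ht : t < l'.length), l'[t]'ht = s[i+1+t]'(by omega) := by
        intro t ht
        simp only [hl'def, List.getElem_drop, List.getElem_take]
      have hch' : l'.Chain' G.Adj := (hch.take _).drop _
      obtain ⟨q0, hq0⟩ := exists_walk_of_chain G l' hl'ne hch'
      have hhead' : l'.head hl'ne = s[i+1]'(by omega) := by
        rw [List.head_eq_getElem_zero hl'ne, hl'get 0 (by omega)]
      have hlast' : l'.getLast hl'ne = s[j-1]'(by omega) := by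
        rw [List.getLast_eq_getElem hl'ne, hl'get (l'.length - 1) (by omega)]
        exact hgetcong _ _ (by omega) _
      refine ⟨q0.copy hhead' hlast', ?_⟩
      intro x hx
      rw [SimpleGraph.Walk.support_copy, hq0] at hx
      obtain ⟨t, ht, rfl⟩ := List.mem_iff_getElem.mp hx
      rw [hl'get t ht]
      exact between (i+1+t) (by omega) (by omega)

theorem stmt_0 [Fintype V] (G : SimpleGraph V) (S : Set V) :
    TConvex G S ↔
      (∀ w ∉ S, ∀ a ∈ S, ∀ b ∈ S, G.Adj w a → G.Adj w b → a = b) ∧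
      ¬ ∃ u ∈ S, ∃ v ∈ S, u ≠ v ∧ ¬ G.Adj u v ∧
        ∃ u' v' : V, u' ∉ S ∧ v' ∉ S ∧ G.Adj u u' ∧ G.Adj v v' ∧
          ∃ p : G.Walk u' v', ∀ w ∈ p.support, w ∉ S := by
  constructor
  · intro hTC
    constructor
    · intro w hwS a haS b hbS hwa hwb
      by_contra hab
      have hQ : TPath G (SimpleGraph.Walk.cons hwa.symm
          (SimpleGraph.Walk.cons hwb SimpleGraph.Walk.nil)) := by
        constructor
        · rw [SimpleGraph.Walk.isPath_def]
          simp [List.nodup_cons, hwa.ne', hwb.ne, hab]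
        · intro i j hij hi hj
          simp only [SimpleGraph.Walk.support_cons, SimpleGraph.Walk.support_nil,
            List.length_cons, List.length_nil] at hj
          omega
      have := hTC haS hbS _ hQ w (by simp)
      exact hwS this
    · rintro ⟨u, hu, v, hv, hne, hnadj, u', v', hu', hv', hau, hav, p, hps⟩
      obtain ⟨q, hq, x, hx, hxS⟩ :=
        tpath_of_outside_connection G S hu hv hne hnadj hu' hv' hau hav p hps
      exact hxS (hTC hu hv q hq x hx)
  · rintro ⟨h1, h2⟩
    exact tconvex_of_conditions G S h1 h2
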